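/- For all natural numbers n ≥ k, F_{n,k} = (-1)^{n+k} · (k!/n!) · s(n,k), where s(n,k) are the Stirling numbers of the first kind. -/

import Mathlib

open Polynomial

/-- `F n k = ∑ 1/(i₁⋯i_k)` over ordered `k`-tuples of positive integers with sum `n`. -/
def F (n k : ℕ) : ℚ :=
  ∑ f ∈ (Finset.Nat.antidiagonalTuple k n).filter (fun f => ∀ j, f j ≠ 0),
    ∏ j, (1 : ℚ) / (f j : ℚ)

/-- The signed Stirling numbers of the first kind, defined by
`X(X-1)⋯(X-n+1) = ∑_{k=0}^n s(n,k) Xᵏ`. -/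
noncomputable def stirlingFirst (n k : ℕ) : ℚ :=
  (∏ i ∈ Finset.range n, (X - C (i : ℚ))).coeff k

/-- Unfiltered version of `F`. -/
noncomputable def Fb (n k : ℕ) : ℚ :=
  ∑ f ∈ Finset.Nat.antidiagonalTuple k n, ∏ j, (1 : ℚ) / (f j : ℚ)

lemma F_eq_Fb (n k : ℕ) : F n k = Fb n k := by
  rw [F, Fb, Finset.sum_filter_of_ne]
  intro f _ hf
  by_contra h
  push_neg at h
  obtain ⟨j, hj⟩ := h
  exact hf (Finset.prod_eq_zero (Finset.mem_univ j) (by simp [hj]))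

theorem sum_AT_succ {M : Type*} [AddCommMonoid M] (k n : ℕ) (g : (Fin (k+1) → ℕ) → M) :
    ∑ f ∈ Finset.Nat.antidiagonalTuple (k+1) n, g f
      = ∑ ab ∈ Finset.HasAntidiagonal.antidiagonal n,
          ∑ f ∈ Finset.Nat.antidiagonalTuple k ab.2, g (Fin.cons ab.1 f) := by
  rw [Finset.sum_sigma']
  refine Finset.sum_nbij' (i := fun f => ⟨(f 0, ∑ i, Fin.tail f i), Fin.tail f⟩)
    (j := fun p => Fin.cons p.1.1 p.2) ?_ ?_ ?_ ?_ ?_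
  · intro f hf
    rw [Finset.Nat.mem_antidiagonalTuple] at hf
    simp only [Finset.mem_sigma, Finset.HasAntidiagonal.mem_antidiagonal, Finset.Nat.mem_antidiagonalTuple]
    refine ⟨?_, trivial⟩
    rw [← hf, Fin.sum_univ_succ]
    rfl
  · intro p hp
    simp only [Finset.mem_sigma, Finset.HasAntidiagonal.mem_antidiagonal,
      Finset.Nat.mem_antidiagonalTuple] at hp ⊢
    rw [Fin.sum_cons, hp.2, hp.1]
  · intro f _
    exact Fin.cons_self_tail f
  · intro p hp
    simp only [Finset.mem_sigma, Finset.HasAntidiagonal.mem_antidiagonal,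
      Finset.Nat.mem_antidiagonalTuple] at hp
    refine Sigma.ext ?_ (by simp [Fin.tail_cons])
    simp only [Fin.cons_zero, Fin.tail_cons]
    rw [hp.2]
  · intro f _
    rw [Fin.cons_self_tail]

/-- symmetry: the weighted sum with weight `f j` does not depend on `j`. -/
lemma sym_lemma (k n : ℕ) (j : Fin (k+1)) :
    ∑ f ∈ Finset.Nat.antidiagonalTuple (k+1) n, (f j : ℚ) * ∏ i, (1 : ℚ) / (f i : ℚ)
      = ∑ f ∈ Finset.Nat.antidiagonalTuple (k+1) n, (f 0 : ℚ) * ∏ i, (1 : ℚ) / (f i : ℚ) := by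
  refine Finset.sum_nbij' (i := fun f => f ∘ Equiv.swap 0 j) (j := fun f => f ∘ Equiv.swap 0 j)
    ?_ ?_ ?_ ?_ ?_
  · intro f hf
    rw [Finset.Nat.mem_antidiagonalTuple] at hf ⊢
    rw [← hf]
    exact Equiv.sum_comp (Equiv.swap 0 j) f
  · intro f hf
    rw [Finset.Nat.mem_antidiagonalTuple] at hf ⊢
    rw [← hf]
    exact Equiv.sum_comp (Equiv.swap 0 j) f
  · intro f _
    funext i
    simp [Function.comp]
  · intro f _
    funext i
    simp [Function.comp]
  · intro f _
    simp only [Function.comp_apply, Equiv.swap_apply_left]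
    congr 1
    exact (Equiv.prod_comp (Equiv.swap 0 j) (fun i => (1 : ℚ) / (f i : ℚ))).symm

lemma prod_cons_inv (k : ℕ) (a : ℕ) (f : Fin k → ℕ) :
    (∏ j, (1 : ℚ) / ((Fin.cons (α := fun _ => ℕ) a f j : ℕ) : ℚ))
      = (1 / (a : ℚ)) * ∏ j, (1 : ℚ) / (f j : ℚ) := by
  rw [Fin.prod_univ_succ]
  simp [Fin.cons_zero, Fin.cons_succ]

/-- key recurrence: `n · Fb n (k+1) = (k+1) · ∑_{m<n} Fb m k`. -/
lemma R2 (n k : ℕ) :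
    (n : ℚ) * Fb n (k+1) = (k+1 : ℚ) * ∑ m ∈ Finset.range n, Fb m k := by
  have step1 : (n : ℚ) * Fb n (k+1)
      = ∑ f ∈ Finset.Nat.antidiagonalTuple (k+1) n,
          ∑ i, (f i : ℚ) * ∏ j, (1 : ℚ) / (f j : ℚ) := by
    rw [Fb, Finset.mul_sum]
    refine Finset.sum_congr rfl fun f hf => ?_
    rw [Finset.Nat.mem_antidiagonalTuple] at hf
    rw [← Finset.sum_mul]
    congr 1
    rw [← hf]
    push_cast
    rfl
  rw [step1, Finset.sum_comm]
  have step2 : ∀ i : Fin (k+1),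
      ∑ f ∈ Finset.Nat.antidiagonalTuple (k+1) n, (f i : ℚ) * ∏ j, (1 : ℚ) / (f j : ℚ)
        = ∑ m ∈ Finset.range n, Fb m k := by
    intro i
    rw [sym_lemma k n i]
    rw [sum_AT_succ k n (fun f => (f 0 : ℚ) * ∏ j, (1 : ℚ) / (f j : ℚ))]
    have step3 : ∀ ab : ℕ × ℕ,
        (∑ f ∈ Finset.Nat.antidiagonalTuple k ab.2,
          ((Fin.cons (α := fun _ => ℕ) ab.1 f 0 : ℕ) : ℚ) * ∏ j, (1 : ℚ) / ((Fin.cons (α := fun _ => ℕ) ab.1 f j : ℕ) : ℚ))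
        = if ab.1 = 0 then 0 else Fb ab.2 k := by
      intro ab
      rcases eq_or_ne ab.1 0 with h0 | h0
      · simp [h0, Fin.cons_zero]
      · rw [if_neg h0, Fb]
        refine Finset.sum_congr rfl fun f _ => ?_
        rw [Fin.cons_zero, prod_cons_inv, ← mul_assoc, mul_one_div,
          div_self (by exact_mod_cast h0), one_mul]
    rw [Finset.sum_congr rfl (fun ab _ => step3 ab),
      Finset.Nat.sum_antidiagonal_eq_sum_range_succ_mk, Finset.sum_range_succ']
    simp only [Nat.succ_ne_zero, if_false, if_pos rfl, add_zero, if_true]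
    have : ∀ i ∈ Finset.range n, (fun m => Fb m k) (n - (i+1)) = (fun m => Fb m k) (n - 1 - i) :=
      fun i _ => by simp only []; congr 1; omega
    rw [Finset.sum_congr rfl this]
    exact Finset.sum_range_reflect (fun m => Fb m k) n
  rw [Finset.sum_congr rfl (fun i _ => step2 i), Finset.sum_const, Finset.card_univ,
    Fintype.card_fin, nsmul_eq_mul]
  push_cast
  ring

lemma st_rec (n k : ℕ) :
    stirlingFirst (n+1) (k+1) = stirlingFirst n k - n * stirlingFirst n (k+1) := by
  unfold stirlingFirst
  rw [Finset.prod_range_succ, mul_sub, coeff_sub, coeff_mul_X, mul_comm, coeff_C_mul]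

lemma st_zero_succ (n : ℕ) : stirlingFirst (n+1) 0 = 0 := by
  rw [stirlingFirst, coeff_zero_eq_eval_zero, eval_prod]
  refine Finset.prod_eq_zero (Finset.mem_range.mpr n.succ_pos) ?_
  simp

lemma st_gt (n k : ℕ) (h : n < k) : stirlingFirst n k = 0 := by
  rw [stirlingFirst]
  refine coeff_eq_zero_of_natDegree_lt (lt_of_le_of_lt ?_ h)
  have h1 : (∏ i ∈ Finset.range n, (X - C (i:ℚ))).natDegree
      ≤ ∑ i ∈ Finset.range n, (X - C (i:ℚ)).natDegree :=
    Polynomial.natDegree_prod_le (Finset.range n) (fun i => X - C (i:ℚ))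
  have h2 : ∑ i ∈ Finset.range n, (X - C (i:ℚ)).natDegree ≤ ∑ _i ∈ Finset.range n, 1 :=
    Finset.sum_le_sum fun i _ => natDegree_X_sub_C_le (i:ℚ)
  simpa using h1.trans h2

lemma Fb_zero_succ (n : ℕ) : Fb (n+1) 0 = 0 := by
  rw [Fb, Finset.Nat.antidiagonalTuple_zero_succ, Finset.sum_empty]

lemma Fb_succ_zero (k : ℕ) : Fb 0 (k+1) = 0 := by
  rw [Fb, Finset.Nat.antidiagonalTuple_zero_right, Finset.sum_singleton]
  refine Finset.prod_eq_zero (Finset.mem_univ 0) (by simp)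

/-- the two-term recurrence for `Fb`. -/
lemma Fb_rec (n k : ℕ) :
    ((n:ℚ)+1) * Fb (n+1) (k+1) = (n : ℚ) * Fb n (k+1) + ((k:ℚ)+1) * Fb n k := by
  have h1 := R2 (n+1) k
  have h2 := R2 n k
  rw [Finset.sum_range_succ, mul_add, ← h2] at h1
  push_cast at h1 ⊢
  linarith

lemma key : ∀ n k : ℕ,
    Fb n k = (-1) ^ (n + k) * ((k.factorial : ℚ) / (n.factorial : ℚ)) * stirlingFirst n k := by
  intro n
  induction n with
  | zero =>
    intro k
    cases k with
    | zero =>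
      rw [Fb, Finset.Nat.antidiagonalTuple_zero_zero, Finset.sum_singleton]
      simp [stirlingFirst]
    | succ k =>
      rw [Fb_succ_zero, st_gt 0 (k+1) k.succ_pos, mul_zero]
  | succ n ih =>
    intro k
    cases k with
    | zero =>
      rw [Fb_zero_succ, st_zero_succ, mul_zero]
    | succ k =>
      have hn1 : ((n:ℚ)+1) ≠ 0 := by positivity
      refine mul_left_cancel₀ hn1 ?_
      rw [Fb_rec, ih (k+1), ih k, st_rec]
      have hnf : ((n.factorial : ℚ)) ≠ 0 := Nat.cast_ne_zero.mpr n.factorial_ne_zero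
      rw [Nat.factorial_succ (n), Nat.factorial_succ (k)]
      push_cast
      rw [show n + 1 + (k + 1) = (n + k) + 2 from by ring,
        show n + (k + 1) = (n + k) + 1 from by ring]
      rw [pow_succ, pow_succ]
      field_simp
      ring

theorem F_eq_stirling (n k : ℕ) (h : k ≤ n) :
    F n k = (-1) ^ (n + k) * ((k.factorial : ℚ) / (n.factorial : ℚ)) * stirlingFirst n k := by
  rw [F_eq_Fb]
  exact key n k
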